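/- If x is a finite singular word of the form x = a x' with x' nonempty, where a is the smallest letter occurring in x, then x' ends with the smallest letter occurring in x'. -/

import Mathlib

/-- Lexicographic order on finite words with the convention that
`u < v` whenever `v` is a proper prefix of `u`. -/
def Wlt {A : Type*} [LinearOrder A] : List A → List A → Prop
  | [], _ => False
  | _ :: _, [] => True
  | a :: u, b :: v => a < b ∨ (a = b ∧ Wlt u v)

/-- A finite word is singular if every factorization `x = reverse u ++ v ++ w`
with `v` nonempty, `v ≠ reverse v`, `u ≠ w` satisfies `v < v̄ ↔ w < u`. -/
def Singular {A : Type*} [LinearOrder A] (x : List A) : Prop :=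
  ∀ u v w : List A, x = u.reverse ++ v ++ w → v ≠ [] → v ≠ v.reverse → u ≠ w →
    (Wlt v v.reverse ↔ Wlt w u)

theorem singular_tail_ends_with_its_min {A : Type*} [LinearOrder A] (a : A) (x' : List A)
    (hne : x' ≠ []) (hmin : ∀ b ∈ a :: x', a ≤ b) (hsing : Singular (a :: x')) :
    ∃ b, x'.getLast? = some b ∧ ∀ c ∈ x', b ≤ c := by
  set b := x'.getLast hne with hb
  have hbx : x'.getLast? = some b := List.getLast?_eq_getLast hne
  refine ⟨b, hbx, ?_⟩
  intro c hc
  by_contra hlt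
  push_neg at hlt
  obtain ⟨p, q, hpq⟩ := List.mem_iff_append.mp hc
  have hq : q ≠ [] := by
    rintro rfl
    have : x'.getLast? = some c := by
      rw [hpq]; simp
    rw [hbx] at this
    exact absurd (Option.some.inj this) (ne_of_gt hlt)
  -- q ends with b
  have hqb : q.getLast? = some b := by
    have h2 : x'.getLast? = q.getLast? := by
      rw [hpq, List.getLast?_append_cons]
      cases q with
      | nil => exact absurd rfl hq
      | cons x xs => exact List.getLast?_cons_cons
    rw [← h2, hbx]
  obtain ⟨t, ht⟩ : ∃ t, q.reverse = b :: t := by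
    have : q.reverse.head? = some b := by rw [List.head?_reverse]; exact hqb
    cases hqr : q.reverse with
    | nil => rw [hqr] at this; simp at this
    | cons x xs =>
      rw [hqr] at this
      simp at this
      exact ⟨xs, by rw [this]⟩
  have hvrev : (c :: q).reverse = b :: (t ++ [c]) := by
    simp [ht]
  have hiff := hsing (p.reverse ++ [a]) (c :: q) []
    (by simp [hpq]) (by simp)
    (by rw [hvrev]; intro h; exact absurd (List.head_eq_of_cons_eq h) (ne_of_lt hlt))
    (by simp)
  rw [hvrev] at hiff
  have : Wlt (c :: q) (b :: (t ++ [c])) := Or.inl hlt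
  have hfalse := hiff.mp this
  exact hfalse
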